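/- Let f: ℝⁿ → ℝ be standard self-concordant (|∇³f(x)[h,h,h]| ≤ 2(∇²f(x)[h,h])^{3/2} for all x, h) and strictly convex with positive-definite Hessian, let x ∈ ℝⁿ, d ≠ 0, and δ = √(dᵀ∇²f(x)d). Then for all t ≥ 0: f(x+td) ≥ f(x) + t∇f(x)ᵀd + δt - log(1 + δt). -/

import Mathlib

open Real Set
open scoped RealInnerProductSpace

theorem self_concordant_lower_bound {n : ℕ}
    (f : EuclideanSpace ℝ (Fin n) → ℝ) (hf : ContDiff ℝ 3 f)
    (hsc : ∀ (x h : EuclideanSpace ℝ (Fin n)),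
      |iteratedFDeriv ℝ 3 f x ![h, h, h]| ≤
        2 * (iteratedFDeriv ℝ 2 f x ![h, h]) ^ ((3 : ℝ) / 2))
    (hconv : ∀ (x h : EuclideanSpace ℝ (Fin n)), h ≠ 0 →
      0 < iteratedFDeriv ℝ 2 f x ![h, h])
    (x d : EuclideanSpace ℝ (Fin n)) (hd : d ≠ 0) (δ : ℝ)
    (hδ : δ = Real.sqrt (iteratedFDeriv ℝ 2 f x ![d, d])) :
    ∀ t : ℝ, 0 ≤ t →
      f (x + t • d) ≥ f x + t * ⟪gradient f x, d⟫ + δ * t - Real.log (1 + δ * t) := by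
  -- abbreviations
  set g1 : ℝ → ℝ := fun t => fderiv ℝ f (x + t • d) d with hg1
  set g2 : ℝ → ℝ := fun t => iteratedFDeriv ℝ 2 f (x + t • d) ![d, d] with hg2
  set g3 : ℝ → ℝ := fun t => iteratedFDeriv ℝ 3 f (x + t • d) ![d, d, d] with hg3
  have hx0 : x + (0:ℝ) • d = x := by simp
  have g2pos : ∀ t : ℝ, 0 < g2 t := fun t => hconv _ d hd
  have hδ0 : δ = Real.sqrt (g2 0) := by
    show δ = Real.sqrt (iteratedFDeriv ℝ 2 f (x + (0:ℝ) • d) ![d, d])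
    rw [hx0, hδ]
  have δpos : 0 < δ := by
    rw [hδ0]; exact Real.sqrt_pos.2 (g2pos 0)
  -- line derivatives
  have hLd : ∀ t : ℝ, HasDerivAt (fun t : ℝ => x + t • d) d t := by
    intro t
    simpa using ((hasDerivAt_id t).smul_const d).const_add x
  have hdf : Differentiable ℝ f := hf.differentiable (by norm_num)
  have hA : ∀ t : ℝ, HasDerivAt (fun t : ℝ => f (x + t • d)) (g1 t) t := by
    intro t
    exact (hdf _).hasFDerivAt.comp_hasDerivAt t (hLd t)
  have hB : ∀ t : ℝ, HasDerivAt g1 (g2 t) t := by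
    intro t
    have hdf' : Differentiable ℝ (fderiv ℝ f) :=
      (hf.fderiv_right (m := 2) (by norm_num)).differentiable (by norm_num)
    have h1 : HasDerivAt (fun t : ℝ => fderiv ℝ f (x + t • d))
        (fderiv ℝ (fderiv ℝ f) (x + t • d) d) t :=
      (hdf' _).hasFDerivAt.comp_hasDerivAt t (hLd t)
    have h2 := (ContinuousLinearMap.apply ℝ ℝ d).hasFDerivAt.comp_hasDerivAt t h1
    have he : g2 t = fderiv ℝ (fderiv ℝ f) (x + t • d) d d := by
      show iteratedFDeriv ℝ 2 f (x + t • d) ![d, d] = _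
      rw [iteratedFDeriv_two_apply]; simp
    rw [he]
    exact h2
  have hC : ∀ t : ℝ, HasDerivAt g2 (g3 t) t := by
    intro t
    have hdf2 : Differentiable ℝ (iteratedFDeriv ℝ 2 f) :=
      hf.differentiable_iteratedFDeriv (by norm_num)
    have h1 : HasDerivAt (fun t : ℝ => iteratedFDeriv ℝ 2 f (x + t • d))
        (fderiv ℝ (iteratedFDeriv ℝ 2 f) (x + t • d) d) t :=
      (hdf2 _).hasFDerivAt.comp_hasDerivAt t (hLd t)
    have h2 := (ContinuousMultilinearMap.apply ℝ
      (fun _ : Fin 2 => EuclideanSpace ℝ (Fin n)) ℝ ![d, d]).hasFDerivAt.comp_hasDerivAt t h1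
    have he : g3 t = fderiv ℝ (iteratedFDeriv ℝ 2 f) (x + t • d) d ![d, d] := by
      show iteratedFDeriv ℝ 3 f (x + t • d) ![d, d, d] = _
      have h3 := iteratedFDeriv_succ_apply_left (𝕜 := ℝ) (f := f) (x := x + t • d)
        (n := 2) ![d, d, d]
      rw [h3]
      norm_num [Fin.tail_def]
    rw [he]
    exact h2
  -- the auxiliary function h = g2 ^ (-1/2)
  set ψ : ℝ → ℝ := fun t => g2 t ^ (-(1/2) : ℝ) with hψ
  have hψd : ∀ t : ℝ, HasDerivAt ψ ((-(1/2) : ℝ) * g2 t ^ ((-(1/2) : ℝ) - 1) * g3 t) t := by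
    intro t
    have := (hC t).rpow_const (p := (-(1/2) : ℝ)) (Or.inl (ne_of_gt (g2pos t)))
    convert this using 1
    ring
  have hψ'le : ∀ t : ℝ, (-(1/2) : ℝ) * g2 t ^ ((-(1/2) : ℝ) - 1) * g3 t ≤ 1 := by
    intro t
    have hb : |g3 t| ≤ 2 * g2 t ^ ((3:ℝ)/2) := hsc (x + t • d) d
    have hApos : (0:ℝ) < g2 t ^ ((-(1/2) : ℝ) - 1) := Real.rpow_pos_of_pos (g2pos t) _
    have hkey : g2 t ^ ((-(1/2) : ℝ) - 1) * g2 t ^ ((3:ℝ)/2) = 1 := by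
      rw [← Real.rpow_add (g2pos t)]
      norm_num
    nlinarith [neg_abs_le (g3 t), abs_nonneg (g3 t)]
  -- ψ t ≤ 1/δ + t for t ≥ 0
  have hψ0 : ψ 0 = δ⁻¹ := by
    rw [hψ, hδ0, Real.sqrt_eq_rpow, ← Real.rpow_neg_one,
      ← Real.rpow_mul (le_of_lt (g2pos 0))]
    norm_num
  have hψle : ∀ t : ℝ, 0 ≤ t → ψ t ≤ δ⁻¹ + t := by
    intro t ht
    have hanti : AntitoneOn (fun t => ψ t - t) (Ici (0:ℝ)) := by
      apply antitoneOn_of_deriv_nonpos (convex_Ici 0)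
      · exact Continuous.continuousOn (by
          exact ((continuous_iff_continuousAt.2 fun t => ((hψd t).sub
            (hasDerivAt_id t)).continuousAt)))
      · intro s hs
        exact ((hψd s).sub (hasDerivAt_id' s)).differentiableAt.differentiableWithinAt
      · intro s hs
        change deriv (ψ - fun x => x) s ≤ 0
        rw [((hψd s).sub (hasDerivAt_id' s)).deriv]
        have := hψ'le s
        linarith
    have h := hanti (self_mem_Ici) ht ht
    simp only [sub_zero] at h
    rw [hψ0] at h
    linarith
  -- g2 lower bound
  have hg2lb : ∀ t : ℝ, 0 ≤ t → δ^2 / (1 + δ*t)^2 ≤ g2 t := by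
    intro t ht
    have h1 : 0 < ψ t := Real.rpow_pos_of_pos (g2pos t) _
    have h2 : ψ t ≤ δ⁻¹ + t := hψle t ht
    have h3 : (ψ t)^2 ≤ (δ⁻¹ + t)^2 := by nlinarith
    have h4 : (ψ t)^2 = (g2 t)⁻¹ := by
      rw [hψ]
      rw [← Real.rpow_natCast ((fun t => g2 t ^ (-(1/2):ℝ)) t) 2,
        ← Real.rpow_mul (le_of_lt (g2pos t))]
      norm_num [Real.rpow_neg_one]
    rw [h4] at h3
    have h5 : 0 < 1 + δ * t := by nlinarith
    rw [div_le_iff₀ (by positivity)]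
    have e : 1 + δ*t = δ * (δ⁻¹ + t) := by field_simp
    rw [e, mul_pow]
    have h10 := mul_le_mul_of_nonneg_left h3 (le_of_lt (g2pos t))
    rw [mul_inv_cancel₀ (ne_of_gt (g2pos t))] at h10
    nlinarith [sq_nonneg δ]
  -- positivity of denominator
  have h1δ : ∀ s : ℝ, 0 ≤ s → (0:ℝ) < 1 + δ * s := fun s hs => by nlinarith
  have hden : ∀ s : ℝ, HasDerivAt (fun u : ℝ => 1 + δ * u) δ s := by
    intro s
    simpa using ((hasDerivAt_id s).const_mul δ).const_add 1
  -- first comparison function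
  set B : ℝ → ℝ := fun u => g1 u - g1 0 - δ + δ / (1 + δ * u) with hBdef
  have hBd : ∀ s : ℝ, 0 ≤ s → HasDerivAt B (g2 s - δ^2 / (1 + δ*s)^2) s := by
    intro s hs
    have hne := ne_of_gt (h1δ s hs)
    have h2 := (hasDerivAt_const s δ).div (hden s) hne
    have h3 := (((hB s).sub_const (g1 0)).sub_const δ).add h2
    refine h3.congr_deriv ?_
    ring
  have hBmono : MonotoneOn B (Ici (0:ℝ)) := by
    apply monotoneOn_of_deriv_nonneg (convex_Ici 0)
    · intro s hs
      exact (hBd s hs).continuousAt.continuousWithinAt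
    · intro s hs
      rw [interior_Ici] at hs
      exact (hBd s (le_of_lt hs)).differentiableAt.differentiableWithinAt
    · intro s hs
      rw [interior_Ici] at hs
      rw [(hBd s (le_of_lt hs)).deriv]
      have := hg2lb s (le_of_lt hs)
      linarith
  have hB0 : B 0 = 0 := by
    simp only [hBdef]
    norm_num
  have hBpos : ∀ s : ℝ, 0 ≤ s → 0 ≤ B s := by
    intro s hs
    have := hBmono self_mem_Ici hs hs
    rw [hB0] at this
    exact this
  -- second comparison function
  set A : ℝ → ℝ := fun u => f (x + u • d)
    - (f x + g1 0 * u + δ * u - Real.log (1 + δ * u)) with hAdef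
  have hAd : ∀ s : ℝ, 0 ≤ s → HasDerivAt A (B s) s := by
    intro s hs
    have hne := ne_of_gt (h1δ s hs)
    have hlog : HasDerivAt (fun u : ℝ => Real.log (1 + δ * u)) (δ / (1 + δ * s)) s :=
      (hden s).log hne
    have h3 := (hA s).sub ((((hasDerivAt_const s (f x)).add
      ((hasDerivAt_id' s).const_mul (g1 0))).add
      ((hasDerivAt_id' s).const_mul δ)).sub hlog)
    refine h3.congr_deriv ?_
    symm
    show g1 s - g1 0 - δ + δ / (1 + δ * s) = _
    ring
  have hAmono : MonotoneOn A (Ici (0:ℝ)) := by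
    apply monotoneOn_of_deriv_nonneg (convex_Ici 0)
    · intro s hs
      exact (hAd s hs).continuousAt.continuousWithinAt
    · intro s hs
      rw [interior_Ici] at hs
      exact (hAd s (le_of_lt hs)).differentiableAt.differentiableWithinAt
    · intro s hs
      rw [interior_Ici] at hs
      rw [(hAd s (le_of_lt hs)).deriv]
      exact hBpos s (le_of_lt hs)
  have hA0 : A 0 = 0 := by
    simp only [hAdef]
    rw [hx0]
    norm_num
  -- conclusion
  intro t ht
  have hAt : 0 ≤ A t := by
    have := hAmono self_mem_Ici ht ht
    rw [hA0] at this
    exact this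
  have hgrad : ⟪gradient f x, d⟫ = g1 0 := by
    show ⟪gradient f x, d⟫ = fderiv ℝ f (x + (0:ℝ) • d) d
    rw [hx0, gradient]
    exact InnerProductSpace.toDual_symm_apply
  simp only [hAdef] at hAt
  rw [hgrad]
  linarith [hAt]
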